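/- Let κ = b₁(4c² - 3ce + 3ω²) with ω > 0, and consider the cubic λ³ + ((b₁c(4c-3e) + (2a₁+3b₁)ω²)/(2ω³))λ² - a₁²b₁(4c²-3ce+3ω²)/(2ω⁵). Then λ₁ = -a₁/ω is a root, and the other two roots are λ₂,₃ = -(κ ± √(κ(κ + 8a₁ω²)))/(4ω³). Moreover, if a₁ > 0 and κ < 0, then at least one of λ₂, λ₃ has positive real part (so the corresponding periodic orbit is unstable). -/

import Mathlib

private lemma cubic_ppm_aux_fact (ω a₁ b₁ c e : ℝ) (hω : 0 < ω) (s : ℂ) :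
    (-(((b₁ * (4 * c ^ 2 - 3 * c * e + 3 * ω ^ 2) : ℝ) : ℂ) + s) / ((4 * ω ^ 3 : ℝ) : ℂ)) ^ 3
      + (((b₁ * c * (4 * c - 3 * e) + (2 * a₁ + 3 * b₁) * ω ^ 2) / (2 * ω ^ 3) : ℝ) : ℂ)
        * (-(((b₁ * (4 * c ^ 2 - 3 * c * e + 3 * ω ^ 2) : ℝ) : ℂ) + s) / ((4 * ω ^ 3 : ℝ) : ℂ)) ^ 2
      - ((a₁ ^ 2 * b₁ * (4 * c ^ 2 - 3 * c * e + 3 * ω ^ 2) / (2 * ω ^ 5) : ℝ) : ℂ)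
    = (-(((b₁ * (4 * c ^ 2 - 3 * c * e + 3 * ω ^ 2) : ℝ) : ℂ) + s) / ((4 * ω ^ 3 : ℝ) : ℂ)
          + (a₁ : ℂ) / (ω : ℂ)) *
        ((s ^ 2 - (((b₁ * (4 * c ^ 2 - 3 * c * e + 3 * ω ^ 2))
            * ((b₁ * (4 * c ^ 2 - 3 * c * e + 3 * ω ^ 2)) + 8 * a₁ * ω ^ 2) : ℝ) : ℂ))
          / (16 * (ω : ℂ) ^ 6)) := by
  have hω' : (ω : ℂ) ≠ 0 := by exact_mod_cast hω.ne'
  push_cast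
  field_simp
  ring

private lemma cubic_ppm_aux_root1 (ω a₁ b₁ c e : ℝ) (hω : 0 < ω) :
    ((-(a₁ / ω) : ℝ) : ℂ) ^ 3
      + (((b₁ * c * (4 * c - 3 * e) + (2 * a₁ + 3 * b₁) * ω ^ 2) / (2 * ω ^ 3) : ℝ) : ℂ)
        * ((-(a₁ / ω) : ℝ) : ℂ) ^ 2
      - ((a₁ ^ 2 * b₁ * (4 * c ^ 2 - 3 * c * e + 3 * ω ^ 2) / (2 * ω ^ 5) : ℝ) : ℂ) = 0 := by
  have hω' : (ω : ℂ) ≠ 0 := by exact_mod_cast hω.ne'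
  push_cast
  field_simp
  ring

/-- For `κ = b₁(4c² - 3ce + 3ω²)`, the cubic
`λ³ + ((b₁c(4c-3e) + (2a₁+3b₁)ω²)/(2ω³))λ² - a₁²b₁(4c²-3ce+3ω²)/(2ω⁵)` has
`λ₁ = -a₁/ω` as a root, its other two roots are
`λ₂,₃ = -(κ ± √(κ(κ + 8a₁ω²)))/(4ω³)`, and if `a₁ > 0` and `κ < 0` at least one of
`λ₂, λ₃` has positive real part. -/
theorem cubic_ppm_roots_unstable (ω c e a₁ b₁ : ℝ) (hω : 0 < ω) :
    let κ : ℝ := b₁ * (4 * c ^ 2 - 3 * c * e + 3 * ω ^ 2)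
    let P : ℂ → ℂ := fun lam =>
      lam ^ 3
        + (((b₁ * c * (4 * c - 3 * e) + (2 * a₁ + 3 * b₁) * ω ^ 2) / (2 * ω ^ 3) : ℝ) : ℂ)
            * lam ^ 2
        - ((a₁ ^ 2 * b₁ * (4 * c ^ 2 - 3 * c * e + 3 * ω ^ 2) / (2 * ω ^ 5) : ℝ) : ℂ)
    P ((-(a₁ / ω) : ℝ) : ℂ) = 0 ∧
    ∀ μ : ℂ, μ ^ 2 = ((κ * (κ + 8 * a₁ * ω ^ 2) : ℝ) : ℂ) →
      P (-(((κ : ℝ) : ℂ) + μ) / ((4 * ω ^ 3 : ℝ) : ℂ)) = 0 ∧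
      P (-(((κ : ℝ) : ℂ) - μ) / ((4 * ω ^ 3 : ℝ) : ℂ)) = 0 ∧
      (0 < a₁ → κ < 0 →
        0 < (-(((κ : ℝ) : ℂ) + μ) / ((4 * ω ^ 3 : ℝ) : ℂ)).re ∨
        0 < (-(((κ : ℝ) : ℂ) - μ) / ((4 * ω ^ 3 : ℝ) : ℂ)).re) := by
  intro κ P
  have hω' : (ω : ℂ) ≠ 0 := by exact_mod_cast hω.ne'
  have hfact : ∀ s : ℂ, P (-(((κ : ℝ) : ℂ) + s) / ((4 * ω ^ 3 : ℝ) : ℂ)) =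
      (-(((κ : ℝ) : ℂ) + s) / ((4 * ω ^ 3 : ℝ) : ℂ) + (a₁ : ℂ) / (ω : ℂ)) *
        ((s ^ 2 - ((κ * (κ + 8 * a₁ * ω ^ 2) : ℝ) : ℂ)) / (16 * (ω : ℂ) ^ 6)) := by
    intro s
    exact cubic_ppm_aux_fact ω a₁ b₁ c e hω s
  refine ⟨?_, ?_⟩
  · exact cubic_ppm_aux_root1 ω a₁ b₁ c e hω
  · intro μ hμ
    have hμ' : (-μ) ^ 2 = ((κ * (κ + 8 * a₁ * ω ^ 2) : ℝ) : ℂ) := by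
      rw [neg_pow]; simpa using hμ
    refine ⟨by rw [hfact μ, hμ, sub_self, zero_div, mul_zero], ?_, ?_⟩
    · have := hfact (-μ)
      rw [hμ', sub_self, zero_div, mul_zero] at this
      simpa [sub_eq_add_neg] using this
    · intro ha hκneg
      by_contra hcon
      push_neg at hcon
      obtain ⟨h1, h2⟩ := hcon
      have hd : (0 : ℝ) < 4 * ω ^ 3 := by positivity
      have e1 : (-(((κ : ℝ) : ℂ) + μ) / ((4 * ω ^ 3 : ℝ) : ℂ)).re
          = (-κ - μ.re) / (4 * ω ^ 3) := by
        rw [Complex.div_ofReal_re]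
        congr 1
        simp only [Complex.neg_re, Complex.add_re, Complex.sub_re, Complex.ofReal_re]
        ring
      have e2 : (-(((κ : ℝ) : ℂ) - μ) / ((4 * ω ^ 3 : ℝ) : ℂ)).re
          = (-κ + μ.re) / (4 * ω ^ 3) := by
        rw [Complex.div_ofReal_re]
        congr 1
        simp only [Complex.neg_re, Complex.add_re, Complex.sub_re, Complex.ofReal_re]
        ring
      rw [e1] at h1
      rw [e2] at h2
      have s1 : -κ - μ.re ≤ 0 := by
        by_contra h; push_neg at h; exact absurd (div_pos h hd) (not_lt.mpr h1)
      have s2 : -κ + μ.re ≤ 0 := by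
        by_contra h; push_neg at h; exact absurd (div_pos h hd) (not_lt.mpr h2)
      linarith
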